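/- Let Q : ℝ → ℂ^{m×m} have locally integrable entries, let U_Q be the Carathéodory solution of U_Q' = (0, Q; −Q*, 0) U_Q, U_Q(0) = I_{2m}, and set V_Q = σ₃ U_Q σ₃, where σ₃ = (I_m, 0; 0, −I_m). Then for every locally absolutely continuous F = (F₁, F₂)^⊤ : ℝ → ℂ^{2m}, one has M(Q)(U_Q F) = V_Q · i (F₁', −F₂')^⊤ almost everywhere on ℝ; equivalently V_Q^{−1} M(Q) U_Q F = i (F₁', −F₂')^⊤ a.e. -/

import Mathlib

open MeasureTheory

noncomputable section

/-- Index set for `ℂ^{2m}`, split into the two `m`-blocks. -/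
abbrev Idx (m : ℕ) := Sum (Fin m) (Fin m)

/-- `ℂ^{2m}` with its Euclidean (Hilbert space) structure. -/
abbrev Vec (m : ℕ) := EuclideanSpace ℂ (Idx m)

/-- A function is locally absolutely continuous iff it is the indefinite integral of a
locally integrable function. -/
def LocAC {E : Type*} [NormedAddCommGroup E] [NormedSpace ℝ E] (F : ℝ → E) : Prop :=
  ∃ g : ℝ → E, LocallyIntegrable g volume ∧ ∀ x : ℝ, F x = F 0 + ∫ t in (0:ℝ)..x, g t

/-- The Dirac-type differential expression `M(Q)F = i (F₁' - Q F₂, -Q* F₁ - F₂')ᵀ`. -/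
def Mop {m : ℕ} (Q : ℝ → Fin m → Fin m → ℂ) (F : ℝ → Vec m) : ℝ → Vec m := fun x => WithLp.toLp 2 <|
  Sum.elim
    (fun i => Complex.I * (deriv (fun y => F y (Sum.inl i)) x - ∑ j, Q x i j * F x (Sum.inr j)))
    (fun i => Complex.I * (-(∑ j, (starRingEnd ℂ) (Q x j i) * F x (Sum.inl j))
        - deriv (fun y => F y (Sum.inr i)) x))

/-- The formally self-adjoint differential expression `N(Q)F = i (F₁' - Q F₂, Q* F₁ + F₂')ᵀ`. -/
def Nop {m : ℕ} (Q : ℝ → Fin m → Fin m → ℂ) (F : ℝ → Vec m) : ℝ → Vec m := fun x => WithLp.toLp 2 <|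
  Sum.elim
    (fun i => Complex.I * (deriv (fun y => F y (Sum.inl i)) x - ∑ j, Q x i j * F x (Sum.inr j)))
    (fun i => Complex.I * ((∑ j, (starRingEnd ℂ) (Q x j i) * F x (Sum.inl j))
        + deriv (fun y => F y (Sum.inr i)) x))

/-- The coefficient matrix `A = (0, Q; -Q*, 0)` of the initial value problem `U' = A U`. -/
def Amat {m : ℕ} (Q : ℝ → Fin m → Fin m → ℂ) : ℝ → Idx m → Idx m → ℂ := fun x a b =>
  match a, b with
  | Sum.inl i, Sum.inr j => Q x i j
  | Sum.inr i, Sum.inl j => -(starRingEnd ℂ) (Q x j i)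
  | _, _ => 0

/-- `U` is the Carathéodory solution of `U' = (0, Q; -Q*, 0) U`, `U(0) = I_{2m}`: it is
continuous and satisfies the corresponding integral equation. -/
def IsCarSol {m : ℕ} (Q : ℝ → Fin m → Fin m → ℂ) (U : ℝ → Idx m → Idx m → ℂ) : Prop :=
  (∀ a b, Continuous fun x => U x a b) ∧
    ∀ (x : ℝ) (a b : Idx m),
      U x a b = (if a = b then 1 else 0) + ∫ t in (0:ℝ)..x, ∑ c, Amat Q t a c * U t c b

/-- Multiplication of a vector in `ℂ^{2m}` by a `2m × 2m` matrix. -/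
def mulVec' {m : ℕ} (A : Idx m → Idx m → ℂ) (v : Vec m) : Vec m := WithLp.toLp 2 fun a => ∑ c, A a c * v c

/-- The derivative `F'` of a vector-valued function, taken entrywise. -/
def derivVec {m : ℕ} (F : ℝ → Vec m) : ℝ → Vec m := fun x => WithLp.toLp 2 fun a => deriv (fun y => F y a) x

/-- The block sign `σ₃ = (I_m, 0; 0, -I_m)` as a sign function on indices. -/
def blockSign {m : ℕ} : Idx m → ℂ := Sum.elim (fun _ => 1) (fun _ => -1)


open Filter Topology Metric Asymptotics in
/-- FTC a.e. (Lebesgue differentiation for the indefinite integral). -/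
lemma ae_hasDerivAt_intervalIntegral {f : ℝ → ℂ} (hf : LocallyIntegrable f volume) :
    ∀ᵐ x ∂(volume : Measure ℝ),
      HasDerivAt (fun u => ∫ t in (0:ℝ)..u, f t) (f x) x := by
  have hII : ∀ a b : ℝ, IntervalIntegrable f volume a b := fun a b =>
    (hf.integrableOn_isCompact isCompact_uIcc).intervalIntegrable
  filter_upwards [IsUnifLocDoublingMeasure.ae_tendsto_average_norm_sub (volume : Measure ℝ) hf 1] with x hx
  have hx' : Tendsto (fun r : ℝ => ⨍ y in closedBall x r, ‖f y - f x‖) (𝓝[>] 0) (𝓝 0) := by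
    refine hx (fun _ => x) id tendsto_id ?_
    filter_upwards [self_mem_nhdsWithin] with r (hr : (0:ℝ) < r)
    simp only [mem_closedBall, dist_self, one_mul]
    exact hr.le
  rw [hasDerivAt_iff_isLittleO, isLittleO_iff]
  intro ε hε
  have hev : ∀ᶠ r in 𝓝[>] (0:ℝ), (⨍ y in closedBall x r, ‖f y - f x‖) < ε / 2 :=
    hx'.eventually_lt_const (by positivity)
  rw [eventually_nhdsWithin_iff, Metric.eventually_nhds_iff] at hev
  obtain ⟨δ, hδ, hsmall⟩ := hev
  filter_upwards [Metric.ball_mem_nhds x hδ] with u hu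
  rcases eq_or_ne u x with rfl | hne
  · simp
  · set r : ℝ := |u - x| with hr_def
    have hr : 0 < r := abs_pos.mpr (sub_ne_zero.mpr hne)
    have hrδ : r < δ := by rwa [mem_ball, Real.dist_eq] at hu
    have hIcc : Set.uIcc x u ⊆ closedBall x r := by
      have h1 : -r ≤ u - x := neg_abs_le _
      have h2 : u - x ≤ r := le_abs_self _
      intro t ht
      rw [Set.mem_uIcc] at ht
      rw [mem_closedBall, Real.dist_eq, abs_le]
      rcases ht with ⟨h3, h4⟩ | ⟨h3, h4⟩ <;> constructor <;> linarith
    have hIcb : IntegrableOn (fun t => ‖f t - f x‖) (closedBall x r) volume :=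
      ((hf.integrableOn_isCompact (isCompact_closedBall x r)).sub
        (integrableOn_const measure_closedBall_lt_top.ne)).norm
    have key : (∫ t in (0:ℝ)..u, f t) - (∫ t in (0:ℝ)..x, f t) - (u - x) • f x
        = ∫ t in x..u, (f t - f x) := by
      rw [intervalIntegral.integral_sub (hII x u) intervalIntegrable_const,
        intervalIntegral.integral_const,
        intervalIntegral.integral_interval_sub_left (hII 0 u) (hII 0 x)]
    have h3 : ∫ t in closedBall x r, ‖f t - f x‖
        = 2 * r * ⨍ y in closedBall x r, ‖f y - f x‖ := by
      have hr0 : (2 * r : ℝ) ≠ 0 := by positivity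
      rw [setAverage_eq, Real.volume_real_closedBall (by positivity),
        smul_eq_mul, ← mul_assoc, mul_inv_cancel₀ hr0, one_mul]
    have hbound : ‖∫ t in x..u, (f t - f x)‖
        ≤ 2 * r * ⨍ y in closedBall x r, ‖f y - f x‖ := by
      refine le_trans intervalIntegral.norm_integral_le_integral_norm_uIoc ?_
      rw [← h3]
      exact setIntegral_mono_set hIcb (Eventually.of_forall fun t => norm_nonneg _)
        ((Set.Ioc_subset_Icc_self.trans hIcc).eventuallyLE)
    calc ‖(∫ t in (0:ℝ)..u, f t) - (∫ t in (0:ℝ)..x, f t) - (u - x) • f x‖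
        = ‖∫ t in x..u, (f t - f x)‖ := by rw [key]
      _ ≤ 2 * r * ⨍ y in closedBall x r, ‖f y - f x‖ := hbound
      _ ≤ 2 * r * (ε / 2) := by
          refine mul_le_mul_of_nonneg_left ?_ (by positivity)
          refine (hsmall ?_ hr).le
          rw [Real.dist_eq, sub_zero, abs_of_pos hr]; exact hrδ
      _ = ε * ‖u - x‖ := by rw [Real.norm_eq_abs, ← hr_def]; ring

/-- locally integrable times continuous is locally integrable. -/
lemma locInt_mul_cont {f u : ℝ → ℂ} (hf : LocallyIntegrable f volume) (hu : Continuous u) :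
    LocallyIntegrable (fun t => f t * u t) volume := by
  rw [MeasureTheory.locallyIntegrable_iff] at hf ⊢
  exact fun K hK => (hf K hK).mul_continuousOn hu.continuousOn hK

/-- with `V_Q = σ₃ U_Q σ₃`, one has
`M(Q)(U_Q F) = V_Q · i (F₁', -F₂')ᵀ` a.e. on `ℝ` for every locally absolutely continuous `F`. -/
theorem Mop_UQ_eq_VQ (m : ℕ) (Q : ℝ → Fin m → Fin m → ℂ)
    (hQ : ∀ i j, LocallyIntegrable (fun x => Q x i j) volume)
    (U : ℝ → Idx m → Idx m → ℂ) (hU : IsCarSol Q U)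
    (F : ℝ → Vec m) (hF : LocAC F) :
    ∀ᵐ x ∂(volume : Measure ℝ), ∀ a : Idx m,
      Mop Q (fun y => mulVec' (U y) (F y)) x a =
        ∑ c, (blockSign a * U x a c * blockSign c) *
          (Complex.I * (Sum.elim (fun i => deriv (fun y => F y (Sum.inl i)) x)
            (fun i => -deriv (fun y => F y (Sum.inr i)) x) c)) := by
  classical
  obtain ⟨g, hg, hFg⟩ := hF
  have hgII : ∀ a b : ℝ, IntervalIntegrable g volume a b := fun a b =>
    (hg.integrableOn_isCompact isCompact_uIcc).intervalIntegrable
  have hFcomp : ∀ (c : Idx m) (y : ℝ), F y c = F 0 c + ∫ t in (0:ℝ)..y, g t c := by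
    intro c y
    have h1 := congrArg (fun v => v c) (hFg y)
    have h2 : (∫ t in (0:ℝ)..y, g t) c = ∫ t in (0:ℝ)..y, g t c := by
      have h := (EuclideanSpace.proj (𝕜 := ℂ) c).intervalIntegral_comp_comm (hgII 0 y)
      simpa using h.symm
    simpa [h2] using h1
  have hFd : ∀ᵐ x ∂(volume : Measure ℝ), ∀ c : Idx m,
      HasDerivAt (fun y => F y c) (g x c) x := by
    rw [ae_all_iff]
    intro c
    have hgc : LocallyIntegrable (fun t => g t c) volume := by
      intro x
      obtain ⟨s, hs, hint⟩ := hg x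
      refine ⟨s, hs, ?_⟩
      have := (EuclideanSpace.proj (𝕜 := ℂ) c).integrable_comp hint
      simpa [IntegrableOn] using this
    filter_upwards [ae_hasDerivAt_intervalIntegral hgc] with x hx
    have heq : (fun y => F y c) = fun y => F 0 c + ∫ t in (0:ℝ)..y, g t c :=
      funext fun y => hFcomp c y
    rw [heq]
    exact hx.const_add _
  have hconj : ∀ i j, LocallyIntegrable (fun t => (starRingEnd ℂ) (Q t i j)) volume := by
    intro i j x
    obtain ⟨s, hs, hint⟩ := hQ i j x
    refine ⟨s, hs, ?_⟩
    have := ((Complex.conjCLE : ℂ ≃L[ℝ] ℂ) : ℂ →L[ℝ] ℂ).integrable_comp hint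
    simpa [IntegrableOn] using this
  have hAent : ∀ d e : Idx m, LocallyIntegrable (fun t => Amat Q t d e) volume := by
    rintro (i | i) (j | j)
    · simpa [Amat] using locallyIntegrable_const (0 : ℂ)
    · exact hQ i j
    · exact (hconj j i).neg
    · simpa [Amat] using locallyIntegrable_const (0 : ℂ)
  have hUd : ∀ᵐ x ∂(volume : Measure ℝ), ∀ d c : Idx m,
      HasDerivAt (fun y => U y d c) (∑ e, Amat Q x d e * U x e c) x := by
    rw [ae_all_iff]; intro d; rw [ae_all_iff]; intro c
    have hloc : LocallyIntegrable (fun t => ∑ e, Amat Q t d e * U t e c) volume :=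
      locallyIntegrable_finset_sum _ fun e _ => locInt_mul_cont (hAent d e) (hU.1 e c)
    filter_upwards [ae_hasDerivAt_intervalIntegral hloc] with x hx
    have heq : (fun y => U y d c)
        = fun y => (if d = c then 1 else 0) + ∫ t in (0:ℝ)..y, ∑ e, Amat Q t d e * U t e c :=
      funext fun y => hU.2 y d c
    rw [heq]
    exact hx.const_add _
  filter_upwards [hFd, hUd] with x hFx hUx
  have hder : ∀ c : Idx m, deriv (fun y => F y c) x = g x c := fun c => (hFx c).deriv
  have hUF : ∀ d : Idx m, HasDerivAt (fun y => ∑ c, U y d c * F y c)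
      (∑ c, ((∑ e, Amat Q x d e * U x e c) * F x c + U x d c * g x c)) x :=
    fun d => HasDerivAt.fun_sum fun c _ => (hUx d c).mul (hFx c)
  have hsplit : ∀ d : Idx m,
      (∑ c, ((∑ e, Amat Q x d e * U x e c) * F x c + U x d c * g x c))
        = (∑ e, Amat Q x d e * ∑ c, U x e c * F x c) + ∑ c, U x d c * g x c := by
    intro d
    rw [Finset.sum_add_distrib]
    congr 1
    simp_rw [Finset.mul_sum, Finset.sum_mul, mul_assoc]
    exact Finset.sum_comm
  intro a
  have hRHS : ∑ c, (blockSign a * U x a c * blockSign c) *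
        (Complex.I * (Sum.elim (fun i => deriv (fun y => F y (Sum.inl i)) x)
          (fun i => -deriv (fun y => F y (Sum.inr i)) x) c))
      = blockSign a * (Complex.I * ∑ c, U x a c * g x c) := by
    rw [Finset.mul_sum, Finset.mul_sum]
    refine Finset.sum_congr rfl fun c _ => ?_
    rcases c with j | j <;>
      simp only [Sum.elim_inl, Sum.elim_inr, blockSign, hder] <;> ring
  rw [hRHS]
  rcases a with i | i
  · simp only [Mop, mulVec', Sum.elim_inl]
    rw [(hUF (Sum.inl i)).deriv, hsplit (Sum.inl i)]
    have hAi : (∑ e, Amat Q x (Sum.inl i) e * ∑ c, U x e c * F x c)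
        = ∑ j, Q x i j * ∑ c, U x (Sum.inr j) c * F x c := by
      rw [Fintype.sum_sum_type]
      simp [Amat]
    rw [hAi]
    simp only [blockSign, Sum.elim_inl]
    ring
  · simp only [Mop, mulVec', Sum.elim_inr]
    rw [(hUF (Sum.inr i)).deriv, hsplit (Sum.inr i)]
    have hAi : (∑ e, Amat Q x (Sum.inr i) e * ∑ c, U x e c * F x c)
        = -∑ j, (starRingEnd ℂ) (Q x j i) * ∑ c, U x (Sum.inl j) c * F x c := by
      rw [Fintype.sum_sum_type]
      simp [Amat]
    rw [hAi]
    simp only [blockSign, Sum.elim_inr]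
    ring
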